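/- Let 1/2 < α < 1, c = 1/4, and Λ(θ) = log(e^θ/(1−α) + 1/α) + log c for θ ≤ 2 log(1/α−1), Λ(θ) = 2 log(1+e^{θ/2}) + log c for 2 log(1/α−1) < θ ≤ 0, and Λ(θ) = log(1+e^θ) + log 2 + log c for θ > 0. Then the Legendre transform I(z) = sup_{θ∈ℝ} (zθ − Λ(θ)) satisfies, for z ∈ (0,1): I(z) = z log(z/α) + (1−z) log((1−z)/(1−α)) + log(4α(1−α)) if 0 < z ≤ 1−α; I(z) = 2[z log z + (1−z) log(1−z) + log 2] if 1−α < z ≤ 1/2; and I(z) = z log z + (1−z) log(1−z) + log 2 if 1/2 < z < 1. -/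

import Mathlib

open Real

noncomputable def tG (z x : ℝ) : ℝ := z * x - Real.log (1 + Real.exp x)

lemma tG_le {z : ℝ} (h0 : 0 < z) (h1 : z < 1) (x : ℝ) :
    tG z x ≤ z * log z + (1 - z) * log (1 - z) := by
  have h1z : 0 < 1 - z := by linarith
  have hx := Real.exp_pos x
  have key : ((1:ℝ)/(1-z)) ^ (1-z) * (exp x / z) ^ z ≤ (1-z) * (1/(1-z)) + z * (exp x / z) :=
    Real.geom_mean_le_arith_mean2_weighted (by linarith) h0.le (by positivity) (by positivity)
      (by ring)
  have hsum : (1-z) * (1/(1-z)) + z * (exp x / z) = 1 + exp x := by field_simp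
  rw [hsum] at key
  have hpos : (0:ℝ) < ((1:ℝ)/(1-z)) ^ (1-z) * (exp x / z) ^ z := by positivity
  have hlog := Real.log_le_log hpos key
  rw [Real.log_mul (by positivity) (by positivity),
    Real.log_rpow (by positivity), Real.log_rpow (by positivity),
    Real.log_div (by positivity) h1z.ne', Real.log_div hx.ne' h0.ne', Real.log_exp,
    Real.log_one] at hlog
  simp only [tG]
  linarith

lemma tG_eq {z : ℝ} (h0 : 0 < z) (h1 : z < 1) :
    tG z (log (z / (1 - z))) = z * log z + (1 - z) * log (1 - z) := by
  have h1z : 0 < 1 - z := by linarith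
  simp only [tG]
  rw [Real.exp_log (by positivity), Real.log_div h0.ne' h1z.ne']
  have : 1 + z / (1 - z) = (1 - z)⁻¹ := by field_simp; ring
  rw [this, Real.log_inv]
  ring

lemma tG_dec {z w x₀ x : ℝ} (h0 : 0 < z) (hzw : z ≤ w) (hw1 : w < 1)
    (hx₀ : x₀ = Real.log (w / (1 - w))) (hx : x₀ ≤ x) : tG z x ≤ tG z x₀ := by
  have hw0 : 0 < w := lt_of_lt_of_le h0 hzw
  have h1 := tG_le hw0 hw1 x
  have h2 : tG w x₀ = w * log w + (1 - w) * log (1 - w) := by rw [hx₀]; exact tG_eq hw0 hw1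
  have h3 : (z - w) * x ≤ (z - w) * x₀ := mul_le_mul_of_nonpos_left hx (by linarith)
  have e1 : tG z x = tG w x + (z - w) * x := by simp only [tG]; ring
  have e2 : tG z x₀ = tG w x₀ + (z - w) * x₀ := by simp only [tG]; ring
  linarith

lemma tG_inc {z w x₀ x : ℝ} (hw0 : 0 < w) (hzw : w ≤ z) (hz1 : z < 1)
    (hx₀ : x₀ = Real.log (w / (1 - w))) (hx : x ≤ x₀) : tG z x ≤ tG z x₀ := by
  have hw1 : w < 1 := lt_of_le_of_lt hzw hz1
  have h1 := tG_le hw0 hw1 x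
  have h2 : tG w x₀ = w * log w + (1 - w) * log (1 - w) := by rw [hx₀]; exact tG_eq hw0 hw1
  have h3 : (z - w) * x ≤ (z - w) * x₀ := mul_le_mul_of_nonneg_left hx (by linarith)
  have e1 : tG z x = tG w x + (z - w) * x := by simp only [tG]; ring
  have e2 : tG z x₀ = tG w x₀ + (z - w) * x₀ := by simp only [tG]; ring
  linarith

lemma tsup_eq {f : ℝ → ℝ} {M θs : ℝ} (hub : ∀ θ, f θ ≤ M) (hmem : f θs = M) :
    sSup (Set.range f) = M :=
  IsGreatest.csSup_eq ⟨⟨θs, hmem⟩, by rintro v ⟨θ, rfl⟩; exact hub θ⟩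

open Real in
theorem stmt_16 (α : ℝ) (hα0 : 1 / 2 < α) (hα1 : α < 1)
    (Λ : ℝ → ℝ)
    (hΛ : ∀ θ : ℝ, Λ θ =
      if θ ≤ 2 * log (1 / α - 1) then log (exp θ / (1 - α) + 1 / α) + log (1 / 4)
      else if θ ≤ 0 then 2 * log (1 + exp (θ / 2)) + log (1 / 4)
      else log (1 + exp θ) + log 2 + log (1 / 4))
    (I : ℝ → ℝ)
    (hI : ∀ z : ℝ, I z = sSup (Set.range fun θ : ℝ => z * θ - Λ θ)) :
    ∀ z : ℝ, 0 < z → z < 1 →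
      ((z ≤ 1 - α →
          I z = z * log (z / α) + (1 - z) * log ((1 - z) / (1 - α)) + log (4 * α * (1 - α))) ∧
        (1 - α < z → z ≤ 1 / 2 →
          I z = 2 * (z * log z + (1 - z) * log (1 - z) + log 2)) ∧
        (1 / 2 < z →
          I z = z * log z + (1 - z) * log (1 - z) + log 2)) := by
  intro z hz0 hz1
  have hα : (0:ℝ) < α := by linarith
  have h1α : (0:ℝ) < 1 - α := by linarith
  have h1z : (0:ℝ) < 1 - z := by linarith
  have hq : (0:ℝ) < (1 - α) / α := by positivity
  have hq1 : (1 - α) / α < 1 := by rw [div_lt_one hα]; linarith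
  have hinv : 1 / α - 1 = (1 - α) / α := by field_simp
  obtain ⟨x₀, hx₀def⟩ : ∃ x₀ : ℝ, x₀ = Real.log ((1 - α) / α) := ⟨_, rfl⟩
  have ht0 : 2 * log (1 / α - 1) = 2 * x₀ := by rw [hinv, ← hx₀def]
  have hx₀neg : x₀ < 0 := by rw [hx₀def]; exact Real.log_neg hq hq1
  have hGx₀ : tG z x₀ = z * x₀ + log α := by
    rw [hx₀def]; simp only [tG]
    rw [Real.exp_log hq, show 1 + (1 - α) / α = α⁻¹ by field_simp; ring, Real.log_inv]; ring
  have hG0 : tG z 0 = -log 2 := by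
    simp only [tG]; rw [Real.exp_zero]; norm_num
  have hlog4 : Real.log (1 / 4) = -(2 * Real.log 2) := by
    rw [show (1/4:ℝ) = ((2:ℝ)^(2:ℕ))⁻¹ by norm_num, Real.log_inv, Real.log_pow]; norm_num
  have hlog4' : Real.log 4 = 2 * Real.log 2 := by
    rw [show (4:ℝ) = (2:ℝ)^(2:ℕ) by norm_num, Real.log_pow]; norm_num
  have hx₀w : x₀ = Real.log ((1 - α) / (1 - (1 - α))) := by
    rw [hx₀def, show (1 - (1 - α)) = α by ring]
  have hzerolog : (0:ℝ) = Real.log ((1/2) / (1 - 1/2)) := by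
    rw [show (1/2:ℝ)/(1-1/2) = 1 by norm_num, Real.log_one]
  have hb1 : ∀ θ : ℝ, z * θ - (log (exp θ / (1 - α) + 1 / α) + log (1 / 4)) =
      tG z (θ - x₀) + z * x₀ + log α + 2 * log 2 := by
    intro θ
    have hexp : Real.exp (θ - x₀) = Real.exp θ * α / (1 - α) := by
      rw [hx₀def, Real.exp_sub, Real.exp_log hq]; field_simp
    have harg : exp θ / (1 - α) + 1 / α = (1 + exp (θ - x₀)) / α := by
      rw [hexp]; field_simp; ring
    rw [harg, Real.log_div (by positivity) hα.ne', hlog4]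
    simp only [tG]; ring
  have hb2 : ∀ θ : ℝ, z * θ - (2 * log (1 + exp (θ / 2)) + log (1 / 4)) =
      2 * tG z (θ / 2) + 2 * log 2 := by
    intro θ; rw [hlog4]; simp only [tG]; ring
  have hb3 : ∀ θ : ℝ, z * θ - (log (1 + exp θ) + log 2 + log (1 / 4)) = tG z θ + log 2 := by
    intro θ; rw [hlog4]; simp only [tG]; ring
  have hE : ∀ x : ℝ, tG z x ≤ z * log z + (1 - z) * log (1 - z) := tG_le hz0 hz1
  refine ⟨?_, ?_, ?_⟩
  · -- Regime 1 : 0 < z ≤ 1 - α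
    intro hz
    have hzα : z ≤ 1/2 := by linarith
    have hub : ∀ θ : ℝ, z * θ - Λ θ ≤
        z * log z + (1 - z) * log (1 - z) + z * x₀ + log α + 2 * log 2 := by
      intro θ
      rw [hΛ θ]
      split_ifs with h1 h2
      · rw [hb1 θ]; linarith [hE (θ - x₀)]
      · rw [hb2 θ]
        have h1' : 2 * x₀ < θ := by rw [← ht0]; exact not_le.mp h1
        have hd : tG z (θ/2) ≤ tG z x₀ :=
          tG_dec hz0 hz (by linarith) hx₀w (by linarith)
        linarith [hGx₀, hE x₀]
      · rw [hb3 θ]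
        have h3 : tG z θ ≤ tG z 0 :=
          tG_dec hz0 hzα (by norm_num) hzerolog (not_le.mp h2).le
        have h4 : tG z 0 ≤ tG z x₀ :=
          tG_dec hz0 hz (by linarith) hx₀w hx₀neg.le
        linarith [hG0, hGx₀, hE x₀]
    have hxz_le : Real.log (z / (1 - z)) ≤ x₀ := by
      rw [hx₀def]
      have hzq : z / (1 - z) ≤ (1 - α) / α := by
        rw [div_le_div_iff₀ h1z hα]; nlinarith
      exact Real.log_le_log (by positivity) hzq
    have hcond : Real.log (z / (1 - z)) + x₀ ≤ 2 * log (1 / α - 1) := by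
      rw [ht0]; linarith
    have hmem : z * (Real.log (z / (1 - z)) + x₀) - Λ (Real.log (z / (1 - z)) + x₀) =
        z * log z + (1 - z) * log (1 - z) + z * x₀ + log α + 2 * log 2 := by
      rw [hΛ, if_pos hcond, hb1,
        show Real.log (z / (1 - z)) + x₀ - x₀ = Real.log (z / (1 - z)) by ring,
        tG_eq hz0 hz1]
    rw [hI z, tsup_eq hub hmem, hx₀def,
      Real.log_div h1α.ne' hα.ne', Real.log_div hz0.ne' hα.ne',
      Real.log_div h1z.ne' h1α.ne',
      Real.log_mul (by positivity) h1α.ne', Real.log_mul (by norm_num) hα.ne', hlog4']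
    ring
  · -- Regime 2 : 1 - α < z ≤ 1/2
    intro hz hz2
    have hub : ∀ θ : ℝ, z * θ - Λ θ ≤
        2 * (z * log z + (1 - z) * log (1 - z)) + 2 * log 2 := by
      intro θ
      rw [hΛ θ]
      split_ifs with h1 h2
      · rw [hb1 θ]
        have h1' : θ ≤ 2 * x₀ := by rw [← ht0]; exact h1
        have hi : tG z (θ - x₀) ≤ tG z x₀ :=
          tG_inc h1α hz.le hz1 hx₀w (by linarith)
        linarith [hGx₀, hE x₀]
      · rw [hb2 θ]; linarith [hE (θ/2)]
      · rw [hb3 θ]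
        have h3 : tG z θ ≤ tG z 0 :=
          tG_dec hz0 hz2 (by norm_num) hzerolog (not_le.mp h2).le
        linarith [hG0, hE 0]
    have hxz_gt : x₀ < Real.log (z / (1 - z)) := by
      rw [hx₀def]
      refine Real.log_lt_log hq ?_
      rw [div_lt_div_iff₀ hα h1z]; nlinarith
    have hc1 : ¬ (2 * Real.log (z / (1 - z)) ≤ 2 * log (1 / α - 1)) := by
      rw [ht0]; push_neg; linarith
    have hc2 : 2 * Real.log (z / (1 - z)) ≤ 0 := by
      have : Real.log (z / (1 - z)) ≤ 0 :=
        Real.log_nonpos (by positivity) (by rw [div_le_one h1z]; linarith)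
      linarith
    have hmem : z * (2 * Real.log (z / (1 - z))) - Λ (2 * Real.log (z / (1 - z))) =
        2 * (z * log z + (1 - z) * log (1 - z)) + 2 * log 2 := by
      rw [hΛ, if_neg hc1, if_pos hc2, hb2,
        show (2 * Real.log (z / (1 - z))) / 2 = Real.log (z / (1 - z)) by ring,
        tG_eq hz0 hz1]
    rw [hI z, tsup_eq hub hmem]; ring
  · -- Regime 3 : 1/2 < z
    intro hz
    have hub : ∀ θ : ℝ, z * θ - Λ θ ≤
        z * log z + (1 - z) * log (1 - z) + log 2 := by
      intro θ
      rw [hΛ θ]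
      split_ifs with h1 h2
      · rw [hb1 θ]
        have h1' : θ ≤ 2 * x₀ := by rw [← ht0]; exact h1
        have hi : tG z (θ - x₀) ≤ tG z x₀ :=
          tG_inc h1α (by linarith) hz1 hx₀w (by linarith)
        have hj : tG z x₀ ≤ tG z 0 :=
          tG_inc (by norm_num) hz.le hz1 hzerolog hx₀neg.le
        linarith [hGx₀, hG0, hE 0]
      · rw [hb2 θ]
        have h3 : tG z (θ/2) ≤ tG z 0 :=
          tG_inc (by norm_num) hz.le hz1 hzerolog (by linarith)
        linarith [hG0, hE 0]
      · rw [hb3 θ]; linarith [hE θ]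
    have hxz_pos : 0 < Real.log (z / (1 - z)) :=
      Real.log_pos (by rw [lt_div_iff₀ h1z]; linarith)
    have hc1 : ¬ (Real.log (z / (1 - z)) ≤ 2 * log (1 / α - 1)) := by
      rw [ht0]; push_neg; linarith
    have hc2 : ¬ (Real.log (z / (1 - z)) ≤ 0) := by push_neg; exact hxz_pos
    have hmem : z * Real.log (z / (1 - z)) - Λ (Real.log (z / (1 - z))) =
        z * log z + (1 - z) * log (1 - z) + log 2 := by
      rw [hΛ, if_neg hc1, if_neg hc2, hb3, tG_eq hz0 hz1]
    rw [hI z, tsup_eq hub hmem]
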